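/- For discrete random variables X, Y, Z with finite joint entropy, 2·H(X,Y,Z) ≤ H(X,Y) + H(X,Z) + H(Y,Z). -/

import Mathlib

open Finset

/-- Probability that the discrete random variable `X` takes the value `v`,
where `p` is the probability mass function on the finite sample space `Ω`. -/
noncomputable def probOf {Ω S : Type*} [Fintype Ω] [DecidableEq S]
    (p : Ω → ℝ) (X : Ω → S) (v : S) : ℝ :=
  ∑ ω ∈ univ.filter (fun ω => X ω = v), p ω

/-- Shannon entropy (base 2) of a discrete random variable. -/
noncomputable def H {Ω S : Type*} [Fintype Ω] [DecidableEq S]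
    (p : Ω → ℝ) (X : Ω → S) : ℝ :=
  -∑ v ∈ univ.image X, probOf p X v * Real.logb 2 (probOf p X v)

/-- Conditional Shannon entropy `H(X | Y)`. -/
noncomputable def condH {Ω S T : Type*} [Fintype Ω] [DecidableEq S] [DecidableEq T]
    (p : Ω → ℝ) (X : Ω → S) (Y : Ω → T) : ℝ :=
  -∑ v ∈ univ.image (fun ω => (X ω, Y ω)),
      probOf p (fun ω => (X ω, Y ω)) v *
        Real.logb 2 (probOf p (fun ω => (X ω, Y ω)) v / probOf p Y v.2)

/-- Joint entropy of the subfamily `(X i)_{i ∈ A}`. -/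
noncomputable def jointH {Ω S : Type*} [Fintype Ω] [DecidableEq S] {n : ℕ}
    (p : Ω → ℝ) (X : Fin n → Ω → S) (A : Finset (Fin n)) : ℝ :=
  H p (fun ω (i : {i // i ∈ A}) => X i.1 ω)

/-- Conditional joint entropy `H(X_A | X_B)`. -/
noncomputable def condJointH {Ω S : Type*} [Fintype Ω] [DecidableEq S] {n : ℕ}
    (p : Ω → ℝ) (X : Fin n → Ω → S) (A B : Finset (Fin n)) : ℝ :=
  condH p (fun ω (i : {i // i ∈ A}) => X i.1 ω) (fun ω (i : {i // i ∈ B}) => X i.1 ω)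

section ShearerHelpers

variable {Ω : Type*} [Fintype Ω] (p : Ω → ℝ)

lemma sum_probOf_mul {B : Type*} [DecidableEq B] (X : Ω → B) (F : B → ℝ) :
    ∑ v ∈ univ.image X, probOf p X v * F v = ∑ ω, p ω * F (X ω) := by
  refine Finset.sum_image' _ (fun c _ => ?_)
  rw [probOf, Finset.sum_mul]
  refine Finset.sum_congr rfl (fun j hj => ?_)
  rw [(Finset.mem_filter.mp hj).2]

lemma H_eq {B : Type*} [DecidableEq B] (X : Ω → B) :
    H p X = -∑ ω, p ω * Real.logb 2 (probOf p X (X ω)) := by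
  rw [H, sum_probOf_mul p X (fun v => Real.logb 2 (probOf p X v))]

lemma probOf_nonneg {B : Type*} [DecidableEq B] (hp : ∀ ω, 0 ≤ p ω) (X : Ω → B) (v : B) :
    0 ≤ probOf p X v :=
  Finset.sum_nonneg fun ω _ => hp ω

lemma probOf_pos {B : Type*} [DecidableEq B] (hp : ∀ ω, 0 ≤ p ω) (X : Ω → B) (ω : Ω)
    (h : 0 < p ω) : 0 < probOf p X (X ω) :=
  lt_of_lt_of_le h (Finset.single_le_sum (fun i _ => hp i)
    (by simp [Finset.mem_filter]))

lemma probOf_le {B C : Type*} [DecidableEq B] [DecidableEq C] (hp : ∀ ω, 0 ≤ p ω)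
    (X : Ω → B) (W : Ω → C) (x : B) (w : C) (himp : ∀ ω, W ω = w → X ω = x) :
    probOf p W w ≤ probOf p X x :=
  Finset.sum_le_sum_of_subset_of_nonneg
    (fun ω hω => by
      simp only [Finset.mem_filter, Finset.mem_univ, true_and] at *
      exact himp ω hω)
    (fun i _ _ => hp i)

lemma sum_probOf_eq_one {B : Type*} [DecidableEq B] (hsum : ∑ ω, p ω = 1) (X : Ω → B) :
    ∑ v ∈ univ.image X, probOf p X v = 1 := by
  have := sum_probOf_mul p X (fun _ => (1:ℝ))
  simpa [hsum] using this

lemma marg_fst {B C : Type*} [DecidableEq B] [DecidableEq C] (X : Ω → B) (Y : Ω → C) (x : B) :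
    ∑ y ∈ univ.image Y, probOf p (fun ω => (X ω, Y ω)) (x, y) = probOf p X x := by
  rw [probOf, ← Finset.sum_fiberwise_of_maps_to (s := univ.filter (fun ω => X ω = x))
      (g := Y) (t := univ.image Y)
      (fun ω _ => Finset.mem_image_of_mem Y (Finset.mem_univ ω)) p]
  refine Finset.sum_congr rfl fun y _ => ?_
  rw [probOf]
  congr 1
  ext ω
  simp [Prod.ext_iff]

lemma gibbs (hp : ∀ ω, 0 ≤ p ω) (hsum : ∑ ω, p ω = 1) (a r : Ω → ℝ)
    (h : ∀ ω, 0 < p ω → 0 < a ω ∧ 0 < r ω)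
    (hs : ∑ ω, p ω * (r ω / a ω) ≤ 1) :
    ∑ ω, p ω * Real.logb 2 (r ω) ≤ ∑ ω, p ω * Real.logb 2 (a ω) := by
  have h2 : (0:ℝ) < Real.log 2 := Real.log_pos one_lt_two
  have key : ∀ ω, p ω * Real.logb 2 (r ω) - p ω * Real.logb 2 (a ω)
      ≤ (p ω * (r ω / a ω) - p ω) / Real.log 2 := by
    intro ω
    rcases eq_or_lt_of_le (hp ω) with h0 | h0
    · simp [← h0]
    · obtain ⟨ha, hr⟩ := h ω h0
      have hd : 0 < r ω / a ω := div_pos hr ha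
      have hlog : Real.log (r ω) - Real.log (a ω) ≤ r ω / a ω - 1 := by
        rw [← Real.log_div hr.ne' ha.ne']
        exact Real.log_le_sub_one_of_pos hd
      have : p ω * Real.logb 2 (r ω) - p ω * Real.logb 2 (a ω)
          = p ω * ((Real.log (r ω) - Real.log (a ω)) / Real.log 2) := by
        rw [Real.logb, Real.logb]; ring
      rw [this]
      have h1 : p ω * ((Real.log (r ω) - Real.log (a ω)) / Real.log 2)
          ≤ p ω * ((r ω / a ω - 1) / Real.log 2) := by
        gcongr
      refine h1.trans (le_of_eq ?_)
      field_simp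
  have hsumineq : ∑ ω, (p ω * Real.logb 2 (r ω) - p ω * Real.logb 2 (a ω))
      ≤ ∑ ω, (p ω * (r ω / a ω) - p ω) / Real.log 2 :=
    Finset.sum_le_sum fun ω _ => key ω
  rw [Finset.sum_sub_distrib] at hsumineq
  have : ∑ ω, (p ω * (r ω / a ω) - p ω) / Real.log 2
      = ((∑ ω, p ω * (r ω / a ω)) - 1) / Real.log 2 := by
    rw [← Finset.sum_div, Finset.sum_sub_distrib, hsum]
  rw [this] at hsumineq
  have hnonpos : ((∑ ω, p ω * (r ω / a ω)) - 1) / Real.log 2 ≤ 0 :=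
    div_nonpos_of_nonpos_of_nonneg (by linarith) h2.le
  linarith

lemma sum_logb_mul (hp : ∀ ω, 0 ≤ p ω) (e d : Ω → ℝ)
    (h : ∀ ω, 0 < p ω → 0 < e ω ∧ 0 < d ω) :
    ∑ ω, p ω * Real.logb 2 (e ω * d ω)
      = ∑ ω, p ω * Real.logb 2 (e ω) + ∑ ω, p ω * Real.logb 2 (d ω) := by
  rw [← Finset.sum_add_distrib]
  refine Finset.sum_congr rfl fun ω _ => ?_
  rcases eq_or_lt_of_le (hp ω) with h0 | h0
  · simp [← h0]
  · obtain ⟨he, hd⟩ := h ω h0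
    rw [Real.logb_mul he.ne' hd.ne', mul_add]


lemma subadd {B C : Type*} [DecidableEq B] [DecidableEq C]
    (hp : ∀ ω, 0 ≤ p ω) (hsum : ∑ ω, p ω = 1) (X : Ω → B) (W : Ω → C) :
    H p (fun ω => (X ω, W ω)) ≤ H p X + H p W := by
  have hXW : ∀ ω, 0 < p ω → 0 < probOf p (fun ω => (X ω, W ω)) (X ω, W ω) :=
    fun ω h => probOf_pos p hp (fun ω => (X ω, W ω)) ω h
  have hX : ∀ ω, 0 < p ω → 0 < probOf p X (X ω) := fun ω h => probOf_pos p hp X ω h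
  have hW : ∀ ω, 0 < p ω → 0 < probOf p W (W ω) := fun ω h => probOf_pos p hp W ω h
  rw [H_eq, H_eq, H_eq]
  have key : ∑ ω, p ω * Real.logb 2 (probOf p X (X ω) * probOf p W (W ω))
      ≤ ∑ ω, p ω * Real.logb 2 (probOf p (fun ω => (X ω, W ω)) (X ω, W ω)) := by
    refine gibbs p hp hsum _ _ (fun ω h => ⟨hXW ω h, mul_pos (hX ω h) (hW ω h)⟩) ?_
    have hrw : ∑ ω, p ω * (probOf p X (X ω) * probOf p W (W ω)
          / probOf p (fun ω => (X ω, W ω)) (X ω, W ω))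
        = ∑ v ∈ univ.image (fun ω => (X ω, W ω)),
            probOf p (fun ω => (X ω, W ω)) v *
              (probOf p X v.1 * probOf p W v.2 / probOf p (fun ω => (X ω, W ω)) v) :=
      (sum_probOf_mul p (fun ω => (X ω, W ω))
        (fun v => probOf p X v.1 * probOf p W v.2 / probOf p (fun ω => (X ω, W ω)) v)).symm
    rw [hrw]
    have step1 : ∑ v ∈ univ.image (fun ω => (X ω, W ω)),
        probOf p (fun ω => (X ω, W ω)) v *
          (probOf p X v.1 * probOf p W v.2 / probOf p (fun ω => (X ω, W ω)) v)
        ≤ ∑ v ∈ univ.image (fun ω => (X ω, W ω)), probOf p X v.1 * probOf p W v.2 := by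
      refine Finset.sum_le_sum fun v _ => ?_
      rcases eq_or_lt_of_le (probOf_nonneg p hp (fun ω => (X ω, W ω)) v) with h0 | h0
      · rw [← h0, zero_mul]
        exact mul_nonneg (probOf_nonneg p hp X _) (probOf_nonneg p hp W _)
      · rw [mul_div_cancel₀ _ h0.ne']
    have step2 : ∑ v ∈ univ.image (fun ω => (X ω, W ω)), probOf p X v.1 * probOf p W v.2
        ≤ ∑ v ∈ (univ.image X) ×ˢ (univ.image W), probOf p X v.1 * probOf p W v.2 := by
      refine Finset.sum_le_sum_of_subset_of_nonneg ?_ (fun v _ _ =>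
        mul_nonneg (probOf_nonneg p hp X _) (probOf_nonneg p hp W _))
      intro v hv
      simp only [Finset.mem_image, Finset.mem_univ, true_and] at hv
      obtain ⟨ω, hω⟩ := hv
      simp only [Finset.mem_product, Finset.mem_image, Finset.mem_univ, true_and]
      exact ⟨⟨ω, by rw [← hω]⟩, ⟨ω, by rw [← hω]⟩⟩
    have step3 : ∑ v ∈ (univ.image X) ×ˢ (univ.image W),
        probOf p X v.1 * probOf p W v.2 = 1 := by
      rw [Finset.sum_product]
      simp only
      rw [← Finset.sum_mul_sum, sum_probOf_eq_one p hsum X, sum_probOf_eq_one p hsum W,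
        one_mul]
    linarith
  have hmul := sum_logb_mul p hp (fun ω => probOf p X (X ω)) (fun ω => probOf p W (W ω))
    (fun ω h => ⟨hX ω h, hW ω h⟩)
  linarith

lemma submod {S T U : Type*} [DecidableEq S] [DecidableEq T] [DecidableEq U]
    (hp : ∀ ω, 0 ≤ p ω) (hsum : ∑ ω, p ω = 1) (X : Ω → S) (Y : Ω → T) (Z : Ω → U) :
    H p (fun ω => (X ω, Y ω, Z ω)) + H p X ≤
      H p (fun ω => (X ω, Y ω)) + H p (fun ω => (X ω, Z ω)) := by
  set trip := fun ω => (X ω, Y ω, Z ω) with htrip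
  set XY := fun ω => (X ω, Y ω) with hXYdef
  set XZ := fun ω => (X ω, Z ω) with hXZdef
  have ha : ∀ ω, 0 < p ω → 0 < probOf p trip (trip ω) := fun ω h => probOf_pos p hp trip ω h
  have he : ∀ ω, 0 < p ω → 0 < probOf p X (X ω) := fun ω h => probOf_pos p hp X ω h
  have hb : ∀ ω, 0 < p ω → 0 < probOf p XY (XY ω) := fun ω h => probOf_pos p hp XY ω h
  have hc : ∀ ω, 0 < p ω → 0 < probOf p XZ (XZ ω) := fun ω h => probOf_pos p hp XZ ω h
  rw [H_eq, H_eq, H_eq, H_eq]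
  have key : ∑ ω, p ω * Real.logb 2 (probOf p XY (XY ω) * probOf p XZ (XZ ω))
      ≤ ∑ ω, p ω * Real.logb 2 (probOf p trip (trip ω) * probOf p X (X ω)) := by
    refine gibbs p hp hsum _ _
      (fun ω h => ⟨mul_pos (ha ω h) (he ω h), mul_pos (hb ω h) (hc ω h)⟩) ?_
    have hrw : ∑ ω, p ω * (probOf p XY (XY ω) * probOf p XZ (XZ ω)
          / (probOf p trip (trip ω) * probOf p X (X ω)))
        = ∑ v ∈ univ.image trip, probOf p trip v *
            (probOf p XY (v.1, v.2.1) * probOf p XZ (v.1, v.2.2)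
              / (probOf p trip v * probOf p X v.1)) :=
      (sum_probOf_mul p trip
        (fun v => probOf p XY (v.1, v.2.1) * probOf p XZ (v.1, v.2.2)
          / (probOf p trip v * probOf p X v.1))).symm
    rw [hrw]
    have step1 : ∑ v ∈ univ.image trip, probOf p trip v *
          (probOf p XY (v.1, v.2.1) * probOf p XZ (v.1, v.2.2)
            / (probOf p trip v * probOf p X v.1))
        ≤ ∑ v ∈ univ.image trip,
            probOf p XY (v.1, v.2.1) * probOf p XZ (v.1, v.2.2) / probOf p X v.1 := by
      refine Finset.sum_le_sum fun v _ => ?_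
      rcases eq_or_lt_of_le (probOf_nonneg p hp trip v) with h0 | h0
      · rw [← h0, zero_mul]
        exact div_nonneg (mul_nonneg (probOf_nonneg p hp XY _) (probOf_nonneg p hp XZ _))
          (probOf_nonneg p hp X _)
      · rw [← mul_div_assoc, mul_div_mul_left _ _ h0.ne']
    have step2 : ∑ v ∈ univ.image trip,
          probOf p XY (v.1, v.2.1) * probOf p XZ (v.1, v.2.2) / probOf p X v.1
        ≤ ∑ v ∈ (univ.image X) ×ˢ ((univ.image Y) ×ˢ (univ.image Z)),
            probOf p XY (v.1, v.2.1) * probOf p XZ (v.1, v.2.2) / probOf p X v.1 := by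
      refine Finset.sum_le_sum_of_subset_of_nonneg ?_ (fun v _ _ =>
        div_nonneg (mul_nonneg (probOf_nonneg p hp XY _) (probOf_nonneg p hp XZ _))
          (probOf_nonneg p hp X _))
      intro v hv
      simp only [Finset.mem_image, Finset.mem_univ, true_and] at hv
      obtain ⟨ω, hω⟩ := hv
      rw [← hω]
      simp only [Finset.mem_product, Finset.mem_image, Finset.mem_univ, true_and, htrip]
      exact ⟨⟨ω, rfl⟩, ⟨ω, rfl⟩, ⟨ω, rfl⟩⟩
    have step3 : ∑ v ∈ (univ.image X) ×ˢ ((univ.image Y) ×ˢ (univ.image Z)),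
        probOf p XY (v.1, v.2.1) * probOf p XZ (v.1, v.2.2) / probOf p X v.1 = 1 := by
      have inner : ∀ x : S, ∑ w ∈ (univ.image Y) ×ˢ (univ.image Z),
          probOf p XY (x, w.1) * probOf p XZ (x, w.2) / probOf p X x
            = probOf p X x := by
        intro x
        rw [Finset.sum_product]
        calc ∑ y ∈ univ.image Y, ∑ z ∈ univ.image Z,
              probOf p XY (x, y) * probOf p XZ (x, z) / probOf p X x
            = ∑ y ∈ univ.image Y,
                (∑ z ∈ univ.image Z, probOf p XY (x, y) * probOf p XZ (x, z))
                  / probOf p X x :=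
              Finset.sum_congr rfl fun y _ => (Finset.sum_div _ _ _).symm
          _ = (∑ y ∈ univ.image Y, ∑ z ∈ univ.image Z,
                probOf p XY (x, y) * probOf p XZ (x, z)) / probOf p X x :=
              (Finset.sum_div _ _ _).symm
          _ = ((∑ y ∈ univ.image Y, probOf p XY (x, y)) *
                (∑ z ∈ univ.image Z, probOf p XZ (x, z))) / probOf p X x := by
              rw [Finset.sum_mul_sum]
          _ = probOf p X x * probOf p X x / probOf p X x := by
              rw [hXYdef, hXZdef, marg_fst p X Y x, marg_fst p X Z x]
          _ = probOf p X x := by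
              rcases eq_or_ne (probOf p X x) 0 with h0 | h0
              · rw [h0]; simp
              · rw [mul_div_assoc, div_self h0, mul_one]
      calc ∑ v ∈ (univ.image X) ×ˢ ((univ.image Y) ×ˢ (univ.image Z)),
            probOf p XY (v.1, v.2.1) * probOf p XZ (v.1, v.2.2) / probOf p X v.1
          = ∑ x ∈ univ.image X, ∑ w ∈ (univ.image Y) ×ˢ (univ.image Z),
              probOf p XY (x, w.1) * probOf p XZ (x, w.2) / probOf p X x :=
            Finset.sum_product _ _ _
        _ = ∑ x ∈ univ.image X, probOf p X x :=
            Finset.sum_congr rfl fun x _ => inner x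
        _ = 1 := sum_probOf_eq_one p hsum X
    linarith
  have hmul1 := sum_logb_mul p hp (fun ω => probOf p trip (trip ω))
    (fun ω => probOf p X (X ω)) (fun ω h => ⟨ha ω h, he ω h⟩)
  have hmul2 := sum_logb_mul p hp (fun ω => probOf p XY (XY ω))
    (fun ω => probOf p XZ (XZ ω)) (fun ω h => ⟨hb ω h, hc ω h⟩)
  linarith

end ShearerHelpers

/-- `2·H(X,Y,Z) ≤ H(X,Y) + H(X,Z) + H(Y,Z)`. -/
theorem two_entropy_le {Ω S T U : Type*} [Fintype Ω]
    [DecidableEq S] [DecidableEq T] [DecidableEq U]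
    (p : Ω → ℝ) (hp : ∀ ω, 0 ≤ p ω) (hsum : ∑ ω, p ω = 1)
    (X : Ω → S) (Y : Ω → T) (Z : Ω → U) :
    2 * H p (fun ω => (X ω, Y ω, Z ω)) ≤
      H p (fun ω => (X ω, Y ω)) + H p (fun ω => (X ω, Z ω)) +
        H p (fun ω => (Y ω, Z ω)) := by
  have h1 := submod p hp hsum X Y Z
  have h2 : H p (fun ω => (X ω, Y ω, Z ω)) ≤ H p X + H p (fun ω => (Y ω, Z ω)) :=
    subadd p hp hsum X (fun ω => (Y ω, Z ω))
  linarith
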